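/- Let T be a finite tree on n ≥ 3 vertices endowed with the ordinary path metric d (each edge has length one), let 𝔇 denote the metric diameter of (T,d), and let ℘_T denote the maximal p-negative type of (T,d), i.e. ℘_T = sup{p ≥ 0 : (T,d) has p-negative type}. Then ℘_T ≥ 1 + ln(1 + 1/(𝔇 · (n−1) · γ(n)))/ln 𝔇. -/

import Mathlib

open scoped BigOperators

/-- The kernel `d(x,y)^p`, with the convention that it vanishes on the diagonal
(this matters only when `p = 0`). -/
noncomputable def negKer {X : Type*} [MetricSpace X] (p : ℝ) (x y : X) : ℝ :=
  @ite ℝ (x = y) (Classical.dec _) 0 (dist x y ^ p)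

/-- `(X,d)` has `p`-negative type: for all `k ≥ 2`, pairwise distinct points
`x₁,…,x_k` and reals `η₁,…,η_k` summing to zero,
`∑_{i,j} d(xᵢ,xⱼ)^p ηᵢ ηⱼ ≤ 0`. -/
def HasNegType (X : Type*) [MetricSpace X] (p : ℝ) : Prop :=
  ∀ (k : ℕ), 2 ≤ k → ∀ (x : Fin k → X), Function.Injective x →
    ∀ (η : Fin k → ℝ), (∑ i, η i) = 0 →
      (∑ i, ∑ j, negKer p (x i) (x j) * η i * η j) ≤ 0

/-- `(X,d)` has strict `p`-negative type: `p`-negative type, with strict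
inequality whenever `η ≠ 0`. -/
def HasStrictNegType (X : Type*) [MetricSpace X] (p : ℝ) : Prop :=
  HasNegType X p ∧
  ∀ (k : ℕ), 2 ≤ k → ∀ (x : Fin k → X), Function.Injective x →
    ∀ (η : Fin k → ℝ), (∑ i, η i) = 0 → η ≠ 0 →
      (∑ i, ∑ j, negKer p (x i) (x j) * η i * η j) < 0

/-- `γ(m) = 1 - (1/2)(1/⌊m/2⌋ + 1/⌈m/2⌉)`. -/
noncomputable def gammaFn (m : ℕ) : ℝ :=
  1 - (1 / 2) * ((1 : ℝ) / ((m / 2 : ℕ) : ℝ) + (1 : ℝ) / (((m + 1) / 2 : ℕ) : ℝ))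


section TreeNegProof
open SimpleGraph Finset
open scoped symmDiff
namespace TreeNeg
variable {V : Type*} [Fintype V] [DecidableEq V] {G : SimpleGraph V}
set_option linter.unusedSectionVars false

noncomputable def gp (hc : G.Connected) (r u : V) : G.Walk r u :=
  (hc.exists_path_of_dist r u).choose

lemma gp_isPath (hc : G.Connected) (r u : V) : (gp hc r u).IsPath :=
  (hc.exists_path_of_dist r u).choose_spec.1

lemma gp_length (hc : G.Connected) (r u : V) : (gp hc r u).length = G.dist r u :=
  (hc.exists_path_of_dist r u).choose_spec.2

lemma dist_split (hc : G.Connected) {r u x : V} {p : G.Walk r u}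
    (hl : p.length = G.dist r u) (hx : x ∈ p.support) :
    G.dist r x = (p.takeUntil x hx).length ∧ G.dist r x + G.dist x u = G.dist r u := by
  have h1 : G.dist r x ≤ (p.takeUntil x hx).length := dist_le _
  have h2 : G.dist x u ≤ (p.dropUntil x hx).length := dist_le _
  have h3 : (p.takeUntil x hx).length + (p.dropUntil x hx).length = p.length := by
    rw [← Walk.length_append, p.take_spec hx]
  have h4 := hc.dist_triangle (u := r) (v := x) (w := u)
  omega

lemma getVert_dist (hc : G.Connected) {r u x : V} {p : G.Walk r u}
    (hl : p.length = G.dist r u) (hx : x ∈ p.support) :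
    p.getVert (G.dist r x) = x := by
  have h1 := (dist_split hc hl hx).1
  conv_lhs => rw [← p.take_spec hx]
  rw [Walk.getVert_append, h1]
  simp

lemma support_inj (hc : G.Connected) {r u x y : V} {p : G.Walk r u}
    (hl : p.length = G.dist r u) (hx : x ∈ p.support) (hy : y ∈ p.support)
    (hxy : G.dist r x = G.dist r y) : x = y := by
  have h1 := getVert_dist hc hl hx
  have h2 := getVert_dist hc hl hy
  rw [← h1, ← h2, hxy]

/-- the subtree support set -/
noncomputable def SS (hc : G.Connected) (r u : V) : Finset V :=
  (gp hc r u).support.toFinset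

lemma mem_SS {hc : G.Connected} {r u x : V} : x ∈ SS hc r u ↔ x ∈ (gp hc r u).support :=
  List.mem_toFinset

lemma r_mem_SS (hc : G.Connected) (r u : V) : r ∈ SS hc r u :=
  mem_SS.2 (gp hc r u).start_mem_support

lemma card_SS (hc : G.Connected) (r u : V) : (SS hc r u).card = G.dist r u + 1 := by
  rw [SS, List.toFinset_card_of_nodup (gp_isPath hc r u).support_nodup,
    Walk.length_support, gp_length]

lemma card_inter_SS (hc : G.Connected) (r u v : V) :
    (SS hc r u ∩ SS hc r v).card ≤ (G.dist r u + G.dist r v - G.dist u v) / 2 + 1 := by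
  classical
  have : (SS hc r u ∩ SS hc r v).card ≤
      (Finset.range ((G.dist r u + G.dist r v - G.dist u v) / 2 + 1)).card := by
    apply Finset.card_le_card_of_injOn (fun x => G.dist r x)
    · intro x hx
      simp only [Finset.coe_inter, Set.mem_inter_iff, Finset.mem_coe, Finset.mem_inter] at hx
      have hxu := (dist_split hc (gp_length hc r u) (mem_SS.1 hx.1)).2
      have hxv := (dist_split hc (gp_length hc r v) (mem_SS.1 hx.2)).2
      have htri := hc.dist_triangle (u := u) (v := x) (w := v)
      have hcomm : G.dist x u = G.dist u x := dist_comm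
      simp only [Finset.coe_range, Set.mem_Iio, Finset.mem_range]
      omega
    · intro x hx y hy hxy
      simp only [Finset.coe_inter, Set.mem_inter_iff, Finset.mem_coe] at hx hy
      exact support_inj hc (gp_length hc r u) (mem_SS.1 hx.1) (mem_SS.1 hy.1) hxy
  simpa using this

/-- lower bound: distance is at most the symmetric difference cardinality -/
lemma dist_le_card_symmDiff (hc : G.Connected) (r u v : V) :
    G.dist u v ≤ (SS hc r u ∆ SS hc r v).card := by
  classical
  have hcard : (SS hc r u ∆ SS hc r v).card + 2 * (SS hc r u ∩ SS hc r v).card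
      = (SS hc r u).card + (SS hc r v).card := by
    have hdef : SS hc r u ∆ SS hc r v = (SS hc r u \ SS hc r v) ∪ (SS hc r v \ SS hc r u) :=
      rfl
    rw [hdef, Finset.card_union_of_disjoint (disjoint_sdiff_sdiff)]
    have e1 := Finset.card_sdiff_add_card_inter (SS hc r u) (SS hc r v)
    have e2 := Finset.card_sdiff_add_card_inter (SS hc r v) (SS hc r u)
    have e3 : SS hc r v ∩ SS hc r u = SS hc r u ∩ SS hc r v := Finset.inter_comm _ _
    rw [e3] at e2
    omega
  have h1 := card_inter_SS hc r u v
  have h2 := card_SS hc r u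
  have h3 := card_SS hc r v
  have htri := hc.dist_triangle (u := u) (v := r) (w := v)
  have hcomm : G.dist u r = G.dist r u := dist_comm
  omega

end TreeNeg

namespace TreeNeg
variable {V : Type*} [Fintype V] [DecidableEq V] {G : SimpleGraph V}
set_option linter.unusedSectionVars false

lemma not_mem_support_of_dist_lt {hc : G.Connected} {r u v : V}
    (hlt : G.dist r u < G.dist r v) : v ∉ (gp hc r u).support := by
  intro hv
  have h2 := (dist_split hc (gp_length hc r u) hv).2
  omega

lemma concat_isPath {hc : G.Connected} {r u v : V} (h : G.Adj u v)
    (hv : v ∉ (gp hc r u).support) : ((gp hc r u).concat h).IsPath := by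
  rw [Walk.isPath_def, Walk.support_concat, List.nodup_append]
  refine ⟨(gp_isPath hc r u).support_nodup, List.nodup_singleton _, ?_⟩
  intro a ha b hb hab
  simp only [List.mem_singleton] at hb
  exact hv (hb ▸ hab ▸ ha)

/-- In a tree, adjacent vertices have root-distances differing by exactly one, and
the geodesic to the farther one extends the geodesic to the nearer one. -/
lemma adj_step (ht : G.IsTree) (r : V) {u v : V} (h : G.Adj u v) :
    (G.dist r v = G.dist r u + 1 ∧
      gp ht.isConnected r v = (gp ht.isConnected r u).concat h ∧
      v ∉ (gp ht.isConnected r u).support) ∨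
    (G.dist r u = G.dist r v + 1 ∧
      gp ht.isConnected r u = (gp ht.isConnected r v).concat h.symm ∧
      u ∉ (gp ht.isConnected r v).support) := by
  have hc := ht.isConnected
  have hd1 : G.dist r v ≤ G.dist r u + 1 := by
    have := hc.dist_triangle (u := r) (v := u) (w := v)
    have hde : G.dist u v = 1 := dist_eq_one_iff_adj.2 h
    omega
  have hd2 : G.dist r u ≤ G.dist r v + 1 := by
    have := hc.dist_triangle (u := r) (v := v) (w := u)
    have hde : G.dist v u = 1 := dist_eq_one_iff_adj.2 h.symm
    omega
  have hne : G.dist r u ≠ G.dist r v := by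
    intro heq
    have huv : u ≠ v := h.ne
    have hvmem : v ∉ (gp hc r u).support := by
      intro hv
      have h2 := (dist_split hc (gp_length hc r u) hv).2
      have : G.dist v u ≠ 0 := by
        rw [dist_ne_zero_iff_ne_and_reachable]
        exact ⟨h.ne', hc.preconnected v u⟩
      omega
    have hpath := concat_isPath (hc := hc) h hvmem
    have huniq := ht.existsUnique_path r v
    have e1 := huniq.unique hpath (gp_isPath hc r v)
    have : ((gp hc r u).concat h).length = (gp hc r v).length := by rw [e1]
    rw [Walk.length_concat, gp_length, gp_length] at this
    omega
  rcases lt_or_gt_of_ne hne with hlt | hgt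
  · left
    have hd : G.dist r v = G.dist r u + 1 := by omega
    have hvmem : v ∉ (gp hc r u).support := not_mem_support_of_dist_lt (by omega)
    have hpath := concat_isPath (hc := hc) h hvmem
    exact ⟨hd, ((ht.existsUnique_path r v).unique (gp_isPath hc r v) hpath), hvmem⟩
  · right
    have hd : G.dist r u = G.dist r v + 1 := by omega
    have humem : u ∉ (gp hc r v).support := not_mem_support_of_dist_lt (by omega)
    have hpath := concat_isPath (hc := hc) h.symm humem
    exact ⟨hd, ((ht.existsUnique_path r u).unique (gp_isPath hc r u) hpath), humem⟩

lemma SS_adj (ht : G.IsTree) (r : V) {u v : V} (h : G.Adj u v) :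
    (SS ht.isConnected r u ∆ SS ht.isConnected r v).card ≤ 1 := by
  have hc := ht.isConnected
  rcases adj_step ht r h with ⟨_, he, hv⟩ | ⟨_, he, hu⟩
  · have : SS hc r v = insert v (SS hc r u) := by
      ext; simp [SS, he, Walk.support_concat]
    rw [this]
    have : SS hc r u ∆ insert v (SS hc r u) = {v} := by
      rw [symmDiff_comm]
      ext a
      simp only [Finset.mem_symmDiff, Finset.mem_insert, Finset.mem_singleton]
      constructor
      · rintro (⟨rfl | ha, hna⟩ | ⟨ha, hna⟩)
        · rfl
        · exact absurd ha hna
        · exact absurd (Or.inr ha) hna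
      · rintro rfl
        exact Or.inl ⟨Or.inl rfl, fun hv' => hv (mem_SS.1 hv')⟩
    rw [this, Finset.card_singleton]
  · have : SS hc r u = insert u (SS hc r v) := by
      ext; simp [SS, he, Walk.support_concat]
    rw [this]
    have : insert u (SS hc r v) ∆ SS hc r v = {u} := by
      ext a
      simp only [Finset.mem_symmDiff, Finset.mem_insert, Finset.mem_singleton]
      constructor
      · rintro (⟨rfl | ha, hna⟩ | ⟨ha, hna⟩)
        · rfl
        · exact absurd ha hna
        · exact absurd (Or.inr ha) hna
      · rintro rfl
        exact Or.inl ⟨Or.inl rfl, fun hu' => hu (mem_SS.1 hu')⟩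
    rw [this, Finset.card_singleton]

lemma card_symmDiff_le_dist (ht : G.IsTree) (r : V) (u v : V) :
    (SS ht.isConnected r u ∆ SS ht.isConnected r v).card ≤ G.dist u v := by
  have hc := ht.isConnected
  suffices H : ∀ {a b : V} (w : G.Walk a b),
      (SS hc r a ∆ SS hc r b).card ≤ w.length by
    obtain ⟨p, hp⟩ := hc.exists_walk_length_eq_dist u v
    simpa [hp] using H p
  intro a b w
  induction w with
  | nil => simp
  | @cons a c b h w ih =>
    have htri : SS hc r a ∆ SS hc r b ⊆ (SS hc r a ∆ SS hc r c) ∪ (SS hc r c ∆ SS hc r b) :=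
      symmDiff_triangle _ _ _
    calc (SS hc r a ∆ SS hc r b).card
        ≤ ((SS hc r a ∆ SS hc r c) ∪ (SS hc r c ∆ SS hc r b)).card := Finset.card_le_card htri
      _ ≤ (SS hc r a ∆ SS hc r c).card + (SS hc r c ∆ SS hc r b).card := Finset.card_union_le _ _
      _ ≤ 1 + w.length := add_le_add (SS_adj ht r h) ih
      _ = (Walk.cons h w).length := by rw [Walk.length_cons]; omega

/-- The fundamental cut identity for trees: graph distance equals the size of
the symmetric difference of the root-path supports. -/
lemma dist_eq_card_symmDiff (ht : G.IsTree) (r : V) (u v : V) :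
    G.dist u v = (SS ht.isConnected r u ∆ SS ht.isConnected r v).card :=
  le_antisymm (dist_le_card_symmDiff ht.isConnected r u v) (card_symmDiff_le_dist ht r u v)

end TreeNeg

namespace TreeNeg
variable {V : Type*} [Fintype V] [DecidableEq V] {G : SimpleGraph V}
set_option linter.unusedSectionVars false

/-- the parent of `u` : penultimate vertex on the chosen geodesic from the root. -/
noncomputable def spar (hc : G.Connected) (r u : V) : V :=
  (gp hc r u).getVert ((gp hc r u).length - 1)

lemma gp_self (hc : G.Connected) (r : V) : gp hc r r = Walk.nil := by
  have := gp_length hc r r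
  rw [SimpleGraph.dist_self] at this
  exact (Walk.nil_iff_eq_nil).1 (Walk.length_eq_zero_iff.1 this)

lemma walk_concat_decomp {a b : V} (w : G.Walk a b) (hw : w.length ≠ 0) :
    ∃ (c : V) (q : G.Walk a c) (h : G.Adj c b), w = q.concat h := by
  cases w with
  | nil => simp at hw
  | cons h w' => exact Walk.exists_cons_eq_concat h w'

lemma concat_getVert {a b c : V} (q : G.Walk a b) (h : G.Adj b c) :
    (q.concat h).getVert q.length = b := by
  rw [Walk.concat_eq_append, Walk.getVert_append]
  simp

lemma spar_of_concat {hc : G.Connected} {r u w : V} {q : G.Walk r w} {h : G.Adj w u}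
    (he : gp hc r u = q.concat h) : spar hc r u = w := by
  rw [spar, he, Walk.length_concat]
  simpa using concat_getVert q h

lemma not_mem_of_concat_isPath {a b c : V} {q : G.Walk a b} {h : G.Adj b c}
    (hp : (q.concat h).IsPath) : c ∉ q.support := by
  have := hp.support_nodup
  rw [Walk.support_concat, List.nodup_append] at this
  intro hcq
  exact this.2.2 c hcq c (List.mem_singleton.2 rfl) rfl

lemma telescope (ht : G.IsTree) (r : V) (f : V → ℝ) (u : V) :
    ∑ x ∈ SS ht.isConnected r u, (f x - f (spar ht.isConnected r x)) = f u - f r := by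
  have hc := ht.isConnected
  suffices H : ∀ n u, G.dist r u = n →
      ∑ x ∈ SS hc r u, (f x - f (spar hc r x)) = f u - f r from H _ u rfl
  intro n
  induction n using Nat.strong_induction_on with
  | _ n ih =>
    intro u hu
    rcases Nat.eq_zero_or_pos n with hn | hn
    · subst hn
      have hur : u = r := by
        by_contra hne
        have : G.dist r u ≠ 0 :=
          dist_ne_zero_iff_ne_and_reachable.2 ⟨Ne.symm hne, hc.preconnected r u⟩
        omega
      rw [hur]
      have hSS : SS hc r r = {r} := by
        simp [SS, gp_self]
      rw [hSS, Finset.sum_singleton]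
      have hsp : spar hc r r = r := by
        simp [spar, gp_self]
      rw [hsp]
    · have hlen : (gp hc r u).length ≠ 0 := by rw [gp_length]; omega
      obtain ⟨w, q, h, he⟩ := walk_concat_decomp (gp hc r u) hlen
      have hqpath : q.IsPath := by
        have := gp_isPath hc r u
        rw [he, Walk.concat_eq_append] at this
        exact this.of_append_left
      have hq : q = gp hc r w := (ht.existsUnique_path r w).unique hqpath (gp_isPath hc r w)
      have hdw : G.dist r w = n - 1 := by
        have e1 : q.length + 1 = (gp hc r u).length := by
          rw [he, Walk.length_concat]
        have e2 := gp_length hc r u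
        have e3 := gp_length hc r w
        rw [← hq] at e3
        omega
      have hnotmem : u ∉ SS hc r w := by
        rw [mem_SS, ← hq]
        exact not_mem_of_concat_isPath (he ▸ gp_isPath hc r u)
      have hSSu : SS hc r u = insert u (SS hc r w) := by
        rw [SS, SS, he, hq, Walk.support_concat]
        ext; simp
      rw [hSSu, Finset.sum_insert hnotmem, ih (n - 1) (by omega) w hdw,
        spar_of_concat (hq ▸ he)]
      ring

/-- the edge flow across the (parent) edge at `x` -/
noncomputable def sflow (hc : G.Connected) (r : V) (η : V → ℝ) (x : V) : ℝ :=
  ∑ u, (if x ∈ SS hc r u then η u else 0)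

lemma sflow_root (hc : G.Connected) (r : V) (η : V → ℝ) (hsum : ∑ u, η u = 0) :
    sflow hc r η r = 0 := by
  rw [sflow, ← hsum]
  exact Finset.sum_congr rfl fun u _ => by simp [r_mem_SS]

lemma sq_expand (T η : V → ℝ) (hsum : ∑ u, η u = 0) :
    ∑ u, ∑ v, (T u - T v) ^ 2 * (η u * η v) = -2 * (∑ u, T u * η u) ^ 2 := by
  have key : ∀ u v : V, (T u - T v) ^ 2 * (η u * η v) =
      (T u ^ 2 * η u) * η v + η u * (T v ^ 2 * η v) - 2 * ((T u * η u) * (T v * η v)) := by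
    intros; ring
  calc ∑ u, ∑ v, (T u - T v) ^ 2 * (η u * η v)
      = ∑ u, (T u ^ 2 * η u * (∑ v, η v) + η u * (∑ v, T v ^ 2 * η v)
          - 2 * (T u * η u) * (∑ v, T v * η v)) := by
        refine Finset.sum_congr rfl fun u _ => ?_
        simp only [Finset.mul_sum]
        rw [← Finset.sum_add_distrib, ← Finset.sum_sub_distrib]
        exact Finset.sum_congr rfl fun v _ => by rw [key]; ring
    _ = -2 * (∑ u, T u * η u) ^ 2 := by
        rw [hsum]
        have : ∀ u : V, T u ^ 2 * η u * 0 + η u * (∑ v, T v ^ 2 * η v)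
            - 2 * (T u * η u) * (∑ v, T v * η v)
            = η u * (∑ v, T v ^ 2 * η v) - (T u * η u) * (2 * (∑ v, T v * η v)) := by
          intro u; ring
        rw [Finset.sum_congr rfl fun u _ => this u, Finset.sum_sub_distrib,
          ← Finset.sum_mul, ← Finset.sum_mul, hsum, zero_mul]
        ring

/-- The cut identity: the 1-negative-type quadratic form on a tree. -/
lemma cut_identity (ht : G.IsTree) (r : V) (η : V → ℝ) (hsum : ∑ u, η u = 0) :
    ∑ u, ∑ v, (G.dist u v : ℝ) * (η u * η v)
      = -2 * ∑ x, (sflow ht.isConnected r η x) ^ 2 := by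
  have hc := ht.isConnected
  have hdist : ∀ u v : V, (G.dist u v : ℝ) =
      ∑ x, ((if x ∈ SS hc r u then (1:ℝ) else 0) - (if x ∈ SS hc r v then (1:ℝ) else 0)) ^ 2 := by
    intro u v
    rw [dist_eq_card_symmDiff ht r u v]
    have : ∀ x : V, ((if x ∈ SS hc r u then (1:ℝ) else 0)
        - (if x ∈ SS hc r v then (1:ℝ) else 0)) ^ 2
        = if x ∈ SS hc r u ∆ SS hc r v then (1:ℝ) else 0 := by
      intro x
      by_cases h1 : x ∈ SS hc r u <;> by_cases h2 : x ∈ SS hc r v <;>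
        simp [Finset.mem_symmDiff, h1, h2]
    rw [Finset.sum_congr rfl fun x _ => this x]
    rw [Finset.sum_boole]
    congr 1
    rw [Finset.filter_mem_eq_inter, Finset.univ_inter]
  calc ∑ u, ∑ v, (G.dist u v : ℝ) * (η u * η v)
      = ∑ u, ∑ v, ∑ x, ((if x ∈ SS hc r u then (1:ℝ) else 0)
          - (if x ∈ SS hc r v then (1:ℝ) else 0)) ^ 2 * (η u * η v) := by
        refine Finset.sum_congr rfl fun u _ => Finset.sum_congr rfl fun v _ => ?_
        rw [hdist u v, Finset.sum_mul]
    _ = ∑ x, ∑ u, ∑ v, ((if x ∈ SS hc r u then (1:ℝ) else 0)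
          - (if x ∈ SS hc r v then (1:ℝ) else 0)) ^ 2 * (η u * η v) := by
        rw [Finset.sum_congr rfl fun u (_ : u ∈ Finset.univ) => Finset.sum_comm]
        exact Finset.sum_comm
    _ = ∑ x, -2 * (∑ u, (if x ∈ SS hc r u then (1:ℝ) else 0) * η u) ^ 2 := by
        refine Finset.sum_congr rfl fun x _ => ?_
        exact sq_expand (fun u => if x ∈ SS hc r u then (1:ℝ) else 0) η hsum
    _ = -2 * ∑ x, (sflow hc r η x) ^ 2 := by
        rw [Finset.mul_sum]
        refine Finset.sum_congr rfl fun x _ => ?_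
        congr 1
        rw [sflow]
        congr 1
        refine Finset.sum_congr rfl fun u _ => ?_
        by_cases h : x ∈ SS hc r u <;> simp [h]

end TreeNeg

namespace TreeNeg
variable {V : Type*} [Fintype V] [DecidableEq V] {G : SimpleGraph V}
set_option linter.unusedSectionVars false

lemma sum_eta_mul_f (ht : G.IsTree) (r : V) (η f : V → ℝ) (hsum : ∑ u, η u = 0) :
    ∑ u, η u * f u
      = ∑ x, (f x - f (spar ht.isConnected r x)) * sflow ht.isConnected r η x := by
  have hc := ht.isConnected
  have h1 : ∑ u, η u * f u = ∑ u, η u * (f u - f r) := by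
    have e : ∀ u : V, η u * (f u - f r) = η u * f u - η u * f r := fun u => by ring
    rw [Finset.sum_congr rfl fun u _ => e u, Finset.sum_sub_distrib, ← Finset.sum_mul, hsum]
    ring
  rw [h1]
  have h2 : ∀ u : V, η u * (f u - f r)
      = ∑ x, (if x ∈ SS hc r u then η u * (f x - f (spar hc r x)) else 0) := by
    intro u
    rw [Finset.sum_ite_mem, Finset.univ_inter, ← Finset.mul_sum, telescope ht r f u]
  rw [Finset.sum_congr rfl fun u _ => h2 u, Finset.sum_comm]
  refine Finset.sum_congr rfl fun x _ => ?_
  rw [sflow, Finset.mul_sum]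
  refine Finset.sum_congr rfl fun u _ => ?_
  by_cases h : x ∈ SS hc r u <;> simp [h] <;> ring

lemma flow_lower (ht : G.IsTree) (r : V) (η f : V → ℝ) (hsum : ∑ u, η u = 0)
    (hcard : 1 ≤ Fintype.card V) (hf : ∀ x, 0 ≤ f x ∧ f x ≤ 1) :
    (∑ u, η u * f u) ^ 2
      ≤ ((Fintype.card V : ℝ) - 1) * ∑ x, sflow ht.isConnected r η x ^ 2 := by
  classical
  have hc := ht.isConnected
  set g : V → ℝ := fun x => f x - f (spar hc r x) with hg
  have hA : ∑ u, η u * f u = ∑ x ∈ Finset.univ.erase r, g x * sflow hc r η x := by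
    rw [sum_eta_mul_f ht r η f hsum]
    rw [Finset.sum_erase]
    rw [sflow_root hc r η hsum, mul_zero]
  have hCS := Finset.sum_mul_sq_le_sq_mul_sq (Finset.univ.erase r) g (sflow hc r η)
  have hg2 : ∑ x ∈ Finset.univ.erase r, g x ^ 2 ≤ ((Fintype.card V : ℝ) - 1) := by
    have : ∀ x ∈ Finset.univ.erase r, g x ^ 2 ≤ 1 := by
      intro x _
      have h0 := (hf x).1
      have h1 := (hf x).2
      have h0' := (hf (spar hc r x)).1
      have h1' := (hf (spar hc r x)).2
      simp only [hg]
      nlinarith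
    calc ∑ x ∈ Finset.univ.erase r, g x ^ 2 ≤ ∑ _x ∈ Finset.univ.erase r, (1:ℝ) :=
          Finset.sum_le_sum this
      _ = ((Finset.univ.erase r).card : ℝ) := by rw [Finset.sum_const]; simp
      _ = ((Fintype.card V : ℝ) - 1) := by
          rw [Finset.card_erase_of_mem (Finset.mem_univ r)]
          rw [Nat.cast_sub (by simpa using hcard)]
          simp
  have hs2 : ∑ x ∈ Finset.univ.erase r, sflow hc r η x ^ 2 ≤ ∑ x, sflow hc r η x ^ 2 :=
    Finset.sum_le_sum_of_subset_of_nonneg (Finset.erase_subset _ _)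
      (fun x _ _ => sq_nonneg _)
  have hnn : (0:ℝ) ≤ ∑ x ∈ Finset.univ.erase r, sflow hc r η x ^ 2 :=
    Finset.sum_nonneg fun x _ => sq_nonneg _
  have hnn2 : (0:ℝ) ≤ ((Fintype.card V : ℝ) - 1) := by
    have : (1:ℝ) ≤ (Fintype.card V : ℝ) := by exact_mod_cast hcard
    linarith
  calc (∑ u, η u * f u) ^ 2
      = (∑ x ∈ Finset.univ.erase r, g x * sflow hc r η x) ^ 2 := by rw [hA]
    _ ≤ (∑ x ∈ Finset.univ.erase r, g x ^ 2) * ∑ x ∈ Finset.univ.erase r, sflow hc r η x ^ 2 :=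
        hCS
    _ ≤ ((Fintype.card V : ℝ) - 1) * ∑ x, sflow hc r η x ^ 2 := by
        apply mul_le_mul hg2 hs2 hnn hnn2

end TreeNeg

namespace TreeNeg

lemma harmonic (k l a b : ℕ) (hk : 1 ≤ k) (hkl : k ≤ l) (hlk : l ≤ k + 1)
    (ha : 1 ≤ a) (hb : 1 ≤ b) (hab : a + b ≤ k + l) :
    (1:ℝ)/k + 1/l ≤ 1/a + 1/b := by
  have hbkl : b ≤ k ∨ l ≤ b := by omega
  set c : ℕ := k + l - b with hc
  have hc1 : 1 ≤ c := by omega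
  have hac : a ≤ c := by omega
  have hcb : c + b = k + l := by omega
  have hkR : (0:ℝ) < k := by exact_mod_cast hk
  have hlR : (0:ℝ) < l := by
    have : 1 ≤ l := le_trans hk hkl
    exact_mod_cast this
  have haR : (0:ℝ) < a := by exact_mod_cast ha
  have hbR : (0:ℝ) < b := by exact_mod_cast hb
  have hcR : (0:ℝ) < c := by exact_mod_cast hc1
  have h1 : (1:ℝ)/c ≤ 1/a := by
    apply one_div_le_one_div_of_le haR
    exact_mod_cast hac
  have hfac : ((b:ℝ) - k) * ((b:ℝ) - l) ≥ 0 := by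
    rcases hbkl with h | h
    · have : (b:ℝ) ≤ k := by exact_mod_cast h
      have h2 : (b:ℝ) ≤ l := by
        have : (k:ℝ) ≤ l := by exact_mod_cast hkl
        linarith
      nlinarith
    · have : (l:ℝ) ≤ b := by exact_mod_cast h
      have h2 : (k:ℝ) ≤ b := by
        have : (k:ℝ) ≤ l := by exact_mod_cast hkl
        linarith
      nlinarith
  have hcbR : (c:ℝ) + b = (k:ℝ) + l := by exact_mod_cast hcb
  have hcbR' : (c:ℝ) = (k:ℝ) + b * (-1) + l := by linarith
  have hmul : (c:ℝ) * b ≤ (k:ℝ) * l := by nlinarith [hfac, hcbR']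
  have key : (1:ℝ)/k + 1/l ≤ 1/c + 1/b := by
    rw [div_add_div _ _ (ne_of_gt hkR) (ne_of_gt hlR),
      div_add_div _ _ (ne_of_gt hcR) (ne_of_gt hbR),
      div_le_div_iff₀ (by positivity) (by positivity)]
    nlinarith [hmul, hcbR, mul_pos hkR hlR, mul_pos hcR hbR, add_pos hkR hlR]
  linarith

lemma neg_part_eq (t : ℝ) : max (-t) 0 = max t 0 - t := by
  rcases le_total t 0 with h | h
  · rw [max_eq_left (neg_nonneg.2 h), max_eq_right h]
    ring
  · rw [max_eq_right (neg_nonpos.2 h), max_eq_left h]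
    ring

lemma pos_part_mul (s t : ℝ) :
    max (s * t) 0 = max s 0 * max t 0 + max (-s) 0 * max (-t) 0 := by
  rcases le_total s 0 with hs | hs <;> rcases le_total t 0 with ht | ht
  · rw [max_eq_left (by nlinarith : (0:ℝ) ≤ s * t), max_eq_right hs, max_eq_right ht,
      max_eq_left (neg_nonneg.2 hs), max_eq_left (neg_nonneg.2 ht)]
    ring
  · have hst : s * t ≤ 0 := mul_nonpos_iff.2 (Or.inr ⟨hs, ht⟩)
    rw [max_eq_right hst, max_eq_right hs, max_eq_right (neg_nonpos.2 ht)]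
    ring
  · have hst : s * t ≤ 0 := mul_nonpos_iff.2 (Or.inl ⟨hs, ht⟩)
    rw [max_eq_right hst, max_eq_right ht, max_eq_right (neg_nonpos.2 hs)]
    ring
  · rw [max_eq_left (mul_nonneg hs ht), max_eq_left hs, max_eq_left ht,
      max_eq_right (neg_nonpos.2 hs)]
    ring

variable {V : Type*} [Fintype V] [DecidableEq V]
set_option linter.unusedSectionVars false

/-- lower bound on `∑ η²` for normalized mean-zero weights -/
lemma eta_sq_lower (η : V → ℝ) (hsum : ∑ u, η u = 0)
    (hnorm : ∑ u, max (η u) 0 = 1) (hcard : 3 ≤ Fintype.card V) :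
    (1:ℝ)/(Fintype.card V / 2 : ℕ) + 1/((Fintype.card V + 1) / 2 : ℕ)
      ≤ ∑ u, η u ^ 2 := by
  classical
  set P := Finset.univ.filter (fun u => 0 < η u) with hPdef
  set N := Finset.univ.filter (fun u => η u < 0) with hNdef
  have hP : ∑ u ∈ P, η u = 1 := by
    rw [hPdef, Finset.sum_filter, ← hnorm]
    refine Finset.sum_congr rfl fun u _ => ?_
    rcases lt_or_ge 0 (η u) with h | h
    · rw [if_pos h, max_eq_left (le_of_lt h)]
    · rw [if_neg (not_lt.2 h), max_eq_right h]
  have hN : ∑ u ∈ N, η u = -1 := by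
    rw [hNdef, Finset.sum_filter]
    have : ∀ u : V, (if η u < 0 then η u else 0) = η u - max (η u) 0 := by
      intro u
      rcases lt_or_ge (η u) 0 with h | h
      · rw [if_pos h, max_eq_right (le_of_lt h)]
        ring
      · rw [if_neg (not_lt.2 h), max_eq_left h]
        ring
    rw [Finset.sum_congr rfl fun u _ => this u, Finset.sum_sub_distrib, hsum, hnorm]
    ring
  have hPne : 1 ≤ P.card := by
    rcases Finset.eq_empty_or_nonempty P with h | h
    · rw [h, Finset.sum_empty] at hP; norm_num at hP
    · exact Finset.card_pos.2 h
  have hNne : 1 ≤ N.card := by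
    rcases Finset.eq_empty_or_nonempty N with h | h
    · rw [h, Finset.sum_empty] at hN; norm_num at hN
    · exact Finset.card_pos.2 h
  have hdisj : Disjoint P N := by
    rw [Finset.disjoint_left]
    intro x hx hx'
    rw [hPdef, Finset.mem_filter] at hx
    rw [hNdef, Finset.mem_filter] at hx'
    exact absurd hx.2 (not_lt.2 (le_of_lt hx'.2))
  have hab : P.card + N.card ≤ Fintype.card V := by
    rw [← Finset.card_union_of_disjoint hdisj]
    simpa using Finset.card_le_card (Finset.subset_univ (P ∪ N))
  have hCSP : (1:ℝ) ≤ (P.card : ℝ) * ∑ u ∈ P, η u ^ 2 := by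
    have := Finset.sum_mul_sq_le_sq_mul_sq P (fun _ => (1:ℝ)) η
    simp only [one_mul, one_pow] at this
    rw [hP] at this
    simpa using this
  have hCSN : (1:ℝ) ≤ (N.card : ℝ) * ∑ u ∈ N, η u ^ 2 := by
    have := Finset.sum_mul_sq_le_sq_mul_sq N (fun _ => (1:ℝ)) η
    simp only [one_mul, one_pow] at this
    rw [hN] at this
    simpa using this
  have haR : (0:ℝ) < P.card := by exact_mod_cast hPne
  have hbR : (0:ℝ) < N.card := by exact_mod_cast hNne
  have h1a : (1:ℝ)/P.card ≤ ∑ u ∈ P, η u ^ 2 := by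
    rw [div_le_iff₀ haR]
    linarith [hCSP]
  have h1b : (1:ℝ)/N.card ≤ ∑ u ∈ N, η u ^ 2 := by
    rw [div_le_iff₀ hbR]
    linarith [hCSN]
  have hsplit : ∑ u ∈ P, η u ^ 2 + ∑ u ∈ N, η u ^ 2 ≤ ∑ u, η u ^ 2 := by
    rw [← Finset.sum_union hdisj]
    exact Finset.sum_le_sum_of_subset_of_nonneg (Finset.subset_univ _)
      (fun x _ _ => sq_nonneg _)
  have hharm := harmonic (Fintype.card V / 2) ((Fintype.card V + 1) / 2) P.card N.card
    (by omega) (by omega) (by omega) hPne hNne (by omega)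
  calc (1:ℝ)/(Fintype.card V / 2 : ℕ) + 1/((Fintype.card V + 1) / 2 : ℕ)
      ≤ 1/P.card + 1/N.card := hharm
    _ ≤ ∑ u ∈ P, η u ^ 2 + ∑ u ∈ N, η u ^ 2 := add_le_add h1a h1b
    _ ≤ ∑ u, η u ^ 2 := hsplit

end TreeNeg

namespace TreeNeg
variable {V : Type*} [Fintype V] [DecidableEq V] [MetricSpace V]
set_option linter.unusedSectionVars false

lemma gamma_pos {n : ℕ} (hn : 3 ≤ n) : 0 < gammaFn n := by
  have hk1 : 1 ≤ n / 2 := by omega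
  have hl2 : 2 ≤ (n + 1) / 2 := by omega
  have hA : (1:ℝ) ≤ ((n / 2 : ℕ) : ℝ) := by exact_mod_cast hk1
  have hB : (2:ℝ) ≤ (((n + 1) / 2 : ℕ) : ℝ) := by exact_mod_cast hl2
  have h1 : (1:ℝ) / ((n / 2 : ℕ) : ℝ) ≤ 1 := by
    rw [div_le_one (by linarith)]; linarith
  have h2 : (1:ℝ) / (((n + 1) / 2 : ℕ) : ℝ) ≤ 1/2 := by
    rw [div_le_div_iff₀ (by linarith) (by norm_num)]; linarith
  rw [gammaFn]
  linarith

lemma two_sub_two_gamma {n : ℕ} (hn : 3 ≤ n) :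
    2 - 2 * gammaFn n = (1:ℝ) / ((n / 2 : ℕ) : ℝ) + 1 / (((n + 1) / 2 : ℕ) : ℝ) := by
  rw [gammaFn]; ring

lemma main_normalized {G : SimpleGraph V} (ht : G.IsTree)
    (hdist : ∀ u v : V, Dist.dist u v = (G.dist u v : ℝ))
    (hcard : 3 ≤ Fintype.card V)
    (𝔇 : ℝ) (hD2 : 2 ≤ 𝔇) (hDub : ∀ u v : V, Dist.dist u v ≤ 𝔇)
    (p : ℝ) (hp1 : 1 ≤ p)
    (hpow : 𝔇 ^ (p - 1)
      = 1 + 1 / (𝔇 * ((Fintype.card V : ℝ) - 1) * gammaFn (Fintype.card V)))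
    (η : V → ℝ) (hsum : ∑ u, η u = 0) (hnorm : ∑ u, max (η u) 0 = 1) :
    ∑ u, ∑ v, (if u = v then (0:ℝ) else Dist.dist u v ^ p) * (η u * η v) ≤ 0 := by
  classical
  have hc := ht.isConnected
  have hnV : Nonempty V := Fintype.card_pos_iff.1 (by omega)
  obtain ⟨r⟩ := hnV
  set n := Fintype.card V with hn
  have hγpos : 0 < gammaFn n := gamma_pos hcard
  have hn1 : (2:ℝ) ≤ (n:ℝ) - 1 := by
    have : (3:ℝ) ≤ (n:ℝ) := by exact_mod_cast hcard
    linarith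
  have hDpos : (0:ℝ) < 𝔇 := by linarith
  have hden : (0:ℝ) < 𝔇 * ((n:ℝ) - 1) * gammaFn n := by positivity
  set c : ℝ := 𝔇 ^ (p - 1) - 1 with hcdef
  have hcval : c = 1 / (𝔇 * ((n:ℝ) - 1) * gammaFn n) := by
    rw [hcdef, hpow]; ring
  have hcpos : 0 < c := by rw [hcval]; positivity
  -- the indicator of the positive part
  set f : V → ℝ := fun u => if 0 < η u then (1:ℝ) else 0 with hf
  have hfb : ∀ x, 0 ≤ f x ∧ f x ≤ 1 := by
    intro x; rw [hf]; dsimp only; split <;> norm_num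
  have hetaf : ∑ u, η u * f u = 1 := by
    rw [← hnorm]
    refine Finset.sum_congr rfl fun u _ => ?_
    rw [hf]; dsimp only
    rcases lt_or_ge 0 (η u) with h | h
    · rw [if_pos h, max_eq_left (le_of_lt h)]; ring
    · rw [if_neg (not_lt.2 h), max_eq_right h]; ring
  have hflow := flow_lower ht r η f hsum (by omega) hfb
  rw [hetaf, one_pow] at hflow
  have hcut := cut_identity ht r η hsum
  have hsq := eta_sq_lower η hsum hnorm hcard
  have hgamma := two_sub_two_gamma (n := n) hcard
  -- the pointwise kernel bound
  have hdge1 : ∀ u v : V, u ≠ v → (1:ℝ) ≤ Dist.dist u v := by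
    intro u v huv
    rw [hdist]
    have : G.dist u v ≠ 0 :=
      dist_ne_zero_iff_ne_and_reachable.2 ⟨huv, hc.preconnected u v⟩
    exact_mod_cast Nat.one_le_iff_ne_zero.2 this
  have hpoint : ∀ u v : V, (if u = v then (0:ℝ) else Dist.dist u v ^ p) * (η u * η v)
      ≤ (G.dist u v : ℝ) * (η u * η v)
        + c * (if u = v then (0:ℝ) else 𝔇 * max (η u * η v) 0) := by
    intro u v
    by_cases huv : u = v
    · subst huv
      simp [SimpleGraph.dist_self]
    · rw [if_neg huv, if_neg huv, ← hdist]
      have hd1 := hdge1 u v huv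
      have hdub := hDub u v
      rcases le_or_gt 0 (η u * η v) with hpos | hneg
      · rw [max_eq_left hpos]
        have h1 : Dist.dist u v ^ p ≤ 𝔇 ^ (p - 1) * Dist.dist u v := by
          have e1 : Dist.dist u v ^ p = Dist.dist u v ^ (p - 1) * Dist.dist u v := by
            rw [← Real.rpow_add_one (by linarith : Dist.dist u v ≠ 0) (p - 1)]
            norm_num
          have e2 : Dist.dist u v ^ (p - 1) ≤ 𝔇 ^ (p - 1) :=
            Real.rpow_le_rpow (by linarith) hdub (by linarith)
          rw [e1]
          exact mul_le_mul_of_nonneg_right e2 (by linarith)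
        have e3 : 𝔇 ^ (p - 1) = 1 + c := by rw [hcdef]; ring
        rw [e3] at h1
        nlinarith [mul_le_mul_of_nonneg_right h1 hpos,
          mul_le_mul_of_nonneg_right (mul_le_mul_of_nonneg_left hdub (le_of_lt hcpos)) hpos]
      · rw [max_eq_right (le_of_lt hneg)]
        have h1 : Dist.dist u v ≤ Dist.dist u v ^ p := by
          have := Real.rpow_le_rpow_of_exponent_le hd1 hp1
          rwa [Real.rpow_one] at this
        nlinarith [mul_le_mul_of_nonneg_right h1 (by linarith : (0:ℝ) ≤ -(η u * η v))]
  -- sum up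
  have hsumbound : ∑ u, ∑ v, (if u = v then (0:ℝ) else Dist.dist u v ^ p) * (η u * η v)
      ≤ ∑ u, ∑ v, ((G.dist u v : ℝ) * (η u * η v)
        + c * (if u = v then (0:ℝ) else 𝔇 * max (η u * η v) 0)) :=
    Finset.sum_le_sum fun u _ => Finset.sum_le_sum fun v _ => hpoint u v
  -- compute the RHS
  have hsplit : ∑ u, ∑ v, ((G.dist u v : ℝ) * (η u * η v)
        + c * (if u = v then (0:ℝ) else 𝔇 * max (η u * η v) 0))
      = (∑ u, ∑ v, (G.dist u v : ℝ) * (η u * η v))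
        + c * ∑ u, ∑ v, (if u = v then (0:ℝ) else 𝔇 * max (η u * η v) 0) := by
    rw [Finset.mul_sum, ← Finset.sum_add_distrib]
    refine Finset.sum_congr rfl fun u _ => ?_
    rw [Finset.mul_sum, ← Finset.sum_add_distrib]
  have hmaxneg : ∑ u, max (-η u) 0 = 1 := by
    rw [Finset.sum_congr rfl fun u (_ : u ∈ Finset.univ) => neg_part_eq (η u),
      Finset.sum_sub_distrib, hnorm, hsum]
    ring
  have hmax2 : ∑ u, ∑ v, max (η u * η v) 0 = 2 := by
    have e : ∀ u : V, ∑ v, max (η u * η v) 0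
        = max (η u) 0 * (∑ v, max (η v) 0) + max (-η u) 0 * (∑ v, max (-η v) 0) := by
      intro u
      rw [Finset.mul_sum, Finset.mul_sum, ← Finset.sum_add_distrib]
      exact Finset.sum_congr rfl fun v _ => pos_part_mul (η u) (η v)
    rw [Finset.sum_congr rfl fun u (_ : u ∈ Finset.univ) => e u]
    rw [hnorm, hmaxneg]
    simp only [mul_one]
    rw [Finset.sum_add_distrib, hnorm, hmaxneg]
    norm_num
  have hB : ∑ u, ∑ v, (if u = v then (0:ℝ) else 𝔇 * max (η u * η v) 0)
      = 𝔇 * (2 - ∑ u, η u ^ 2) := by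
    have hrow : ∀ u : V, ∑ v, (if u = v then (0:ℝ) else 𝔇 * max (η u * η v) 0)
        = (∑ v, 𝔇 * max (η u * η v) 0) - 𝔇 * η u ^ 2 := by
      intro u
      have e1 : ∀ v : V, (if u = v then (0:ℝ) else 𝔇 * max (η u * η v) 0)
          = 𝔇 * max (η u * η v) 0 - (if u = v then 𝔇 * max (η u * η v) 0 else 0) := by
        intro v
        by_cases h : u = v <;> simp [h]
      rw [Finset.sum_congr rfl fun v _ => e1 v, Finset.sum_sub_distrib]
      congr 1
      rw [Finset.sum_ite_eq]
      simp only [Finset.mem_univ, if_true]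
      rw [max_eq_left (mul_self_nonneg _)]
      ring
    rw [Finset.sum_congr rfl fun u (_ : u ∈ Finset.univ) => hrow u, Finset.sum_sub_distrib]
    have e2 : ∑ u : V, ∑ v, 𝔇 * max (η u * η v) 0 = 𝔇 * 2 := by
      rw [← hmax2, Finset.mul_sum]
      refine Finset.sum_congr rfl fun u _ => ?_
      rw [Finset.mul_sum]
    rw [e2, ← Finset.mul_sum]
    ring
  -- final assembly
  have h2γ : 2 - ∑ u, η u ^ 2 ≤ 2 * gammaFn n := by
    rw [← hn] at hsq
    rw [← hgamma] at hsq
    linarith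
  have hcd : c * 𝔇 = 1 / (((n:ℝ) - 1) * gammaFn n) := by
    rw [hcval]
    field_simp
  have hs2pos : 1 / ((n:ℝ) - 1) ≤ ∑ x, sflow hc r η x ^ 2 := by
    rw [div_le_iff₀ (by linarith)]
    linarith [hflow]
  have hfin1 : c * (𝔇 * (2 - ∑ u, η u ^ 2)) ≤ 2 / (((n:ℝ) - 1)) := by
    have e : c * (𝔇 * (2 - ∑ u, η u ^ 2)) = (c * 𝔇) * (2 - ∑ u, η u ^ 2) := by ring
    rw [e, hcd]
    have hpos : (0:ℝ) < ((n:ℝ) - 1) * gammaFn n := by positivity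
    calc 1 / (((n:ℝ) - 1) * gammaFn n) * (2 - ∑ u, η u ^ 2)
        ≤ 1 / (((n:ℝ) - 1) * gammaFn n) * (2 * gammaFn n) :=
          mul_le_mul_of_nonneg_left h2γ (by positivity)
      _ = 2 / ((n:ℝ) - 1) := by
          field_simp
  calc ∑ u, ∑ v, (if u = v then (0:ℝ) else Dist.dist u v ^ p) * (η u * η v)
      ≤ (∑ u, ∑ v, (G.dist u v : ℝ) * (η u * η v))
        + c * ∑ u, ∑ v, (if u = v then (0:ℝ) else 𝔇 * max (η u * η v) 0) := by
        rw [← hsplit]; exact hsumbound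
    _ = -2 * ∑ x, sflow hc r η x ^ 2 + c * (𝔇 * (2 - ∑ u, η u ^ 2)) := by
        rw [hcut, hB]
    _ ≤ -2 * (1 / ((n:ℝ) - 1)) + 2 / ((n:ℝ) - 1) := by
        have := mul_le_mul_of_nonneg_left hs2pos (by norm_num : (0:ℝ) ≤ 2)
        nlinarith [hfin1]
    _ ≤ 0 := by
        rw [neg_mul]
        ring_nf
        simp
end TreeNeg

namespace TreeNeg
variable {V : Type*} [Fintype V] [DecidableEq V] [MetricSpace V]
set_option linter.unusedSectionVars false

noncomputable def negKer' (p : ℝ) (x y : V) : ℝ :=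
  if x = y then 0 else Dist.dist x y ^ p

lemma L1 {k : ℕ} (x : Fin k → V) (η : Fin k → ℝ) (g : V → ℝ) :
    ∑ u, g u * (∑ i, if x i = u then η i else 0) = ∑ i, g (x i) * η i := by
  have e : ∀ u : V, g u * (∑ i, if x i = u then η i else 0)
      = ∑ i, (if x i = u then g u * η i else 0) := by
    intro u
    rw [Finset.mul_sum]
    exact Finset.sum_congr rfl fun i _ => by by_cases h : x i = u <;> simp [h]
  rw [Finset.sum_congr rfl fun u (_ : u ∈ Finset.univ) => e u, Finset.sum_comm]
  refine Finset.sum_congr rfl fun i _ => ?_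
  rw [Finset.sum_ite_eq]
  simp

lemma reindex {k : ℕ} (K : V → V → ℝ) (x : Fin k → V) (η : Fin k → ℝ) :
    ∑ u, ∑ v, K u v * ((∑ i, if x i = u then η i else 0) * (∑ j, if x j = v then η j else 0))
      = ∑ i, ∑ j, K (x i) (x j) * η i * η j := by
  have e1 : ∀ u : V,
      ∑ v, K u v * ((∑ i, if x i = u then η i else 0) * (∑ j, if x j = v then η j else 0))
      = (∑ v, K u v * (∑ j, if x j = v then η j else 0)) * (∑ i, if x i = u then η i else 0) := by
    intro u
    rw [Finset.sum_mul]
    exact Finset.sum_congr rfl fun v _ => by ring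
  rw [Finset.sum_congr rfl fun u (_ : u ∈ Finset.univ) => e1 u]
  rw [L1 x η (fun u => ∑ v, K u v * (∑ j, if x j = v then η j else 0))]
  refine Finset.sum_congr rfl fun i _ => ?_
  rw [L1 x η (fun v => K (x i) v)]
  rw [Finset.sum_mul]
  exact Finset.sum_congr rfl fun j _ => by ring

/-- The quadratic form inequality for arbitrary mean-zero weights on the vertex set. -/
lemma vform {G : SimpleGraph V} (ht : G.IsTree)
    (hdist : ∀ u v : V, Dist.dist u v = (G.dist u v : ℝ))
    (hcard : 3 ≤ Fintype.card V)
    (𝔇 : ℝ) (hD2 : 2 ≤ 𝔇) (hDub : ∀ u v : V, Dist.dist u v ≤ 𝔇)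
    (p : ℝ) (hp1 : 1 ≤ p)
    (hpow : 𝔇 ^ (p - 1)
      = 1 + 1 / (𝔇 * ((Fintype.card V : ℝ) - 1) * gammaFn (Fintype.card V)))
    (η : V → ℝ) (hsum : ∑ u, η u = 0) :
    ∑ u, ∑ v, negKer' p u v * (η u * η v) ≤ 0 := by
  classical
  set M : ℝ := ∑ u, max (η u) 0 with hM
  have hMnn : 0 ≤ M := Finset.sum_nonneg fun u _ => le_max_right _ _
  rcases eq_or_lt_of_le hMnn with hM0 | hMpos
  · -- M = 0 : η ≡ 0
    have hzero : ∀ u : V, η u = 0 := by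
      have hmax0 : ∀ u ∈ Finset.univ, max (η u) 0 = 0 := by
        intro u hu
        have := (Finset.sum_eq_zero_iff_of_nonneg
          (fun u _ => le_max_right (η u) 0)).1 hM0.symm
        exact this u hu
      have hnp : ∀ u ∈ Finset.univ, η u ≤ 0 := by
        intro u hu
        have := hmax0 u hu
        rcases le_total (η u) 0 with h | h
        · exact h
        · rw [max_eq_left h] at this; rw [this]
      have := (Finset.sum_eq_zero_iff_of_nonpos hnp).1 hsum
      exact fun u => this u (Finset.mem_univ u)
    have : ∀ u : V, ∑ v, negKer' p u v * (η u * η v) = 0 := by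
      intro u
      refine Finset.sum_eq_zero fun v _ => by rw [hzero u]; ring
    rw [Finset.sum_congr rfl fun u (_ : u ∈ Finset.univ) => this u]
    simp
  · -- normalize
    set η' : V → ℝ := fun u => η u / M with hη'
    have hsum' : ∑ u, η' u = 0 := by
      rw [hη']
      dsimp only
      rw [← Finset.sum_div, hsum, zero_div]
    have hnorm' : ∑ u, max (η' u) 0 = 1 := by
      have e : ∀ u : V, max (η' u) 0 = max (η u) 0 / M := by
        intro u
        rw [hη']
        dsimp only
        rw [← zero_div M, max_div_div_right hMnn, zero_div]
      rw [Finset.sum_congr rfl fun u (_ : u ∈ Finset.univ) => e u, ← Finset.sum_div, ← hM,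
        div_self (ne_of_gt hMpos)]
    have hmain := main_normalized ht hdist hcard 𝔇 hD2 hDub p hp1 hpow η' hsum' hnorm'
    have hrel : ∑ u, ∑ v, (if u = v then (0:ℝ) else Dist.dist u v ^ p) * (η' u * η' v)
        = (∑ u, ∑ v, negKer' p u v * (η u * η v)) * (1 / (M * M)) := by
      rw [Finset.sum_mul]
      refine Finset.sum_congr rfl fun u _ => ?_
      rw [Finset.sum_mul]
      refine Finset.sum_congr rfl fun v _ => ?_
      rw [hη', negKer']
      dsimp only
      field_simp
    rw [hrel] at hmain
    have hMM : 0 < 1 / (M * M) := by positivity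
    by_contra hcon
    push_neg at hcon
    nlinarith [hmain, hcon, hMM]

end TreeNeg


namespace TreeNeg
variable {V : Type*} [Fintype V] [DecidableEq V] [MetricSpace V]
set_option linter.unusedSectionVars false

lemma negKer_eq (p : ℝ) (u v : V) : negKer p u v = negKer' p u v := by
  by_cases h : u = v <;> simp [negKer, negKer', h]

lemma hasNegType {G : SimpleGraph V} (ht : G.IsTree)
    (hdist : ∀ u v : V, Dist.dist u v = (G.dist u v : ℝ))
    (hcard : 3 ≤ Fintype.card V)
    (𝔇 : ℝ) (hD2 : 2 ≤ 𝔇) (hDub : ∀ u v : V, Dist.dist u v ≤ 𝔇)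
    (p : ℝ) (hp1 : 1 ≤ p)
    (hpow : 𝔇 ^ (p - 1)
      = 1 + 1 / (𝔇 * ((Fintype.card V : ℝ) - 1) * gammaFn (Fintype.card V))) :
    HasNegType V p := by
  intro k hk x hxinj η hη
  set ηV : V → ℝ := fun v => ∑ i, if x i = v then η i else 0 with hηV
  have hsumV : ∑ v, ηV v = 0 := by
    have e : ∑ v, ηV v = ∑ i : Fin k, η i := by
      rw [hηV]
      dsimp only
      rw [Finset.sum_comm]
      refine Finset.sum_congr rfl fun i _ => ?_
      rw [Finset.sum_ite_eq]
      simp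
    rw [e, hη]
  have hform := vform ht hdist hcard 𝔇 hD2 hDub p hp1 hpow ηV hsumV
  have hre := reindex (negKer' p) x η
  calc ∑ i, ∑ j, negKer p (x i) (x j) * η i * η j
      = ∑ i, ∑ j, negKer' p (x i) (x j) * η i * η j :=
        Finset.sum_congr rfl fun i _ => Finset.sum_congr rfl fun j _ => by
          rw [negKer_eq]
    _ = ∑ u, ∑ v, negKer' p u v * (ηV u * ηV v) := hre.symm
    _ ≤ 0 := hform

lemma exists_triple {G : SimpleGraph V} (ht : G.IsTree) (hcard : 3 ≤ Fintype.card V) :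
    ∃ u y z : V, G.dist u y = 1 ∧ G.dist y z = 1 ∧ G.dist u z = 2 := by
  classical
  have hc := ht.isConnected
  have hnV : Nonempty V := Fintype.card_pos_iff.1 (by omega)
  obtain ⟨a⟩ := hnV
  have h1 : 0 < (Finset.univ.erase a).card := by
    rw [Finset.card_erase_of_mem (Finset.mem_univ a), Finset.card_univ]
    omega
  obtain ⟨b, hb⟩ := Finset.card_pos.1 h1
  have h2 : 0 < ((Finset.univ.erase a).erase b).card := by
    rw [Finset.card_erase_of_mem hb, Finset.card_erase_of_mem (Finset.mem_univ a),
      Finset.card_univ]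
    omega
  obtain ⟨cc, hcm⟩ := Finset.card_pos.1 h2
  have hba : b ≠ a := (Finset.mem_erase.1 hb).1
  have hcb : cc ≠ b := (Finset.mem_erase.1 hcm).1
  have hca : cc ≠ a := (Finset.mem_erase.1 (Finset.mem_erase.1 hcm).2).1
  have hnonadj : ∃ u v : V, u ≠ v ∧ ¬ G.Adj u v := by
    by_contra hcon
    push_neg at hcon
    have hab := hcon a b (Ne.symm hba)
    have hbc := hcon b cc (Ne.symm hcb)
    have hac := hcon a cc (Ne.symm hca)
    have hP1 : (Walk.cons hac Walk.nil).IsPath := by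
      rw [Walk.cons_isPath_iff]
      exact ⟨Walk.IsPath.nil, by simp [hca.symm]⟩
    have hP2 : (Walk.cons hab (Walk.cons hbc Walk.nil)).IsPath := by
      rw [Walk.cons_isPath_iff, Walk.cons_isPath_iff]
      refine ⟨⟨Walk.IsPath.nil, by simp [hcb.symm]⟩, ?_⟩
      simp [Ne.symm hba, hca.symm]
    have := (ht.existsUnique_path a cc).unique hP1 hP2
    have hlen := congrArg Walk.length this
    simp at hlen
  obtain ⟨u, v, huv, hnadj⟩ := hnonadj
  have hd2 : 2 ≤ G.dist u v := by
    have h0 : G.dist u v ≠ 0 :=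
      dist_ne_zero_iff_ne_and_reachable.2 ⟨huv, hc.preconnected u v⟩
    have h1' : G.dist u v ≠ 1 := fun h => hnadj (dist_eq_one_iff_adj.1 h)
    omega
  obtain ⟨q, hqpath, hqlen⟩ := hc.exists_path_of_dist u v
  cases q with
  | nil => rw [← hqlen] at hd2; simp at hd2
  | cons h1 q1 =>
    cases q1 with
    | nil => rw [← hqlen] at hd2; simp at hd2
    | @cons y z _ h2 q2 =>
      -- h1 : G.Adj u y, h2 : G.Adj y z, q2 : G.Walk z v
      refine ⟨u, _, _, dist_eq_one_iff_adj.2 h1, dist_eq_one_iff_adj.2 h2, ?_⟩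
      have huy : u ≠ _ := h1.ne
      have hyz := h2.ne
      have huz : u ≠ z := by
        rw [Walk.cons_isPath_iff] at hqpath
        intro huz'
        exact hqpath.2 (by
          rw [Walk.support_cons]
          right
          rw [huz']
          exact q2.start_mem_support)
      have hnadj2 : ¬ G.Adj u z := by
        intro hadj
        have hP1 : (Walk.cons hadj Walk.nil).IsPath := by
          rw [Walk.cons_isPath_iff]
          exact ⟨Walk.IsPath.nil, by simp [huz]⟩
        have hP2 : (Walk.cons h1 (Walk.cons h2 Walk.nil)).IsPath := by
          rw [Walk.cons_isPath_iff, Walk.cons_isPath_iff]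
          refine ⟨⟨Walk.IsPath.nil, by simp [hyz]⟩, ?_⟩
          simp [huy, huz]
        have := (ht.existsUnique_path u z).unique hP1 hP2
        have hlen := congrArg Walk.length this
        simp at hlen
      have hle : G.dist u z ≤ 2 := by
        have := dist_le (Walk.cons h1 (Walk.cons h2 Walk.nil))
        simpa using this
      have h0 : G.dist u z ≠ 0 :=
        dist_ne_zero_iff_ne_and_reachable.2 ⟨huz, hc.preconnected u z⟩
      have h1' : G.dist u z ≠ 1 := fun h => hnadj2 (dist_eq_one_iff_adj.1 h)
      omega

end TreeNeg

end TreeNegProof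

/-- Lower bound on the maximal `p`-negative type of a finite metric tree with
the ordinary path metric: `℘_T ≥ 1 + ln(1 + 1/(𝔇(n-1)γ(n)))/ln 𝔇`. -/
theorem tree_maximal_negType_lower_bound {V : Type*} [Fintype V] [MetricSpace V]
    (G : SimpleGraph V) (htree : G.IsTree)
    (hdist : ∀ u v : V, dist u v = (G.dist u v : ℝ))
    (hcard : 3 ≤ Fintype.card V)
    (𝔇 : ℝ) (h𝔇 : 𝔇 = Metric.diam (Set.univ : Set V)) :
    1 + Real.log (1 + 1 / (𝔇 * ((Fintype.card V : ℝ) - 1) * gammaFn (Fintype.card V))) /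
        Real.log 𝔇 ≤
      sSup {p : ℝ | 0 ≤ p ∧ HasNegType V p} := by
  classical
  have hc := htree.isConnected
  have hbd : Bornology.IsBounded (Set.univ : Set V) := Set.finite_univ.isBounded
  have hDub : ∀ u v : V, dist u v ≤ 𝔇 := by
    intro u v
    rw [h𝔇]
    exact Metric.dist_le_diam_of_mem hbd (Set.mem_univ u) (Set.mem_univ v)
  obtain ⟨u, y, z, huy, hyz, huz⟩ := TreeNeg.exists_triple htree hcard
  have hduy : dist u y = 1 := by rw [hdist, huy]; norm_num
  have hdyz : dist y z = 1 := by rw [hdist, hyz]; norm_num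
  have hduz : dist u z = 2 := by rw [hdist, huz]; norm_num
  have hdyu : dist y u = 1 := by rw [dist_comm]; exact hduy
  have hdzy : dist z y = 1 := by rw [dist_comm]; exact hdyz
  have hdzu : dist z u = 2 := by rw [dist_comm]; exact hduz
  have hne_uy : u ≠ y := by
    intro h; rw [h] at huy; rw [SimpleGraph.dist_self] at huy; exact absurd huy (by norm_num)
  have hne_yz : y ≠ z := by
    intro h; rw [h] at hyz; rw [SimpleGraph.dist_self] at hyz; exact absurd hyz (by norm_num)
  have hne_uz : u ≠ z := by
    intro h; rw [h] at huz; rw [SimpleGraph.dist_self] at huz; exact absurd huz (by norm_num)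
  have hD2 : 2 ≤ 𝔇 := by
    have := hDub u z
    rw [hduz] at this
    exact this
  have hγpos : 0 < gammaFn (Fintype.card V) := TreeNeg.gamma_pos hcard
  have hn1 : (2:ℝ) ≤ (Fintype.card V : ℝ) - 1 := by
    have : (3:ℝ) ≤ (Fintype.card V : ℝ) := by exact_mod_cast hcard
    linarith
  set ε : ℝ := 1 / (𝔇 * ((Fintype.card V : ℝ) - 1) * gammaFn (Fintype.card V)) with hε
  have hεpos : 0 < ε := by rw [hε]; positivity
  set p₀ : ℝ := 1 + Real.log (1 + ε) / Real.log 𝔇 with hp₀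
  have hlogD : 0 < Real.log 𝔇 := Real.log_pos (by linarith)
  have hlogε : 0 < Real.log (1 + ε) := Real.log_pos (by linarith)
  have hp01 : 1 ≤ p₀ := by
    rw [hp₀]
    have : 0 ≤ Real.log (1 + ε) / Real.log 𝔇 := le_of_lt (div_pos hlogε hlogD)
    linarith
  have hpow : 𝔇 ^ (p₀ - 1) = 1 + ε := by
    have e1 : p₀ - 1 = Real.log (1 + ε) / Real.log 𝔇 := by rw [hp₀]; ring
    rw [e1, Real.rpow_def_of_pos (by linarith : (0:ℝ) < 𝔇), mul_comm,
      div_mul_cancel₀ _ (ne_of_gt hlogD)]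
    exact Real.exp_log (by linarith)
  have hneg : HasNegType V p₀ :=
    TreeNeg.hasNegType htree hdist hcard 𝔇 hD2 hDub p₀ hp01 hpow
  have hmem : p₀ ∈ {p : ℝ | 0 ≤ p ∧ HasNegType V p} := ⟨by linarith, hneg⟩
  have hbdd : BddAbove {p : ℝ | 0 ≤ p ∧ HasNegType V p} := by
    refine ⟨2, ?_⟩
    rintro p ⟨hp0, hp⟩
    set xf : Fin 3 → V := ![u, y, z] with hxf
    have hinj : Function.Injective xf := by
      intro i j hij
      fin_cases i <;> fin_cases j <;>
        simp only [hxf, Matrix.cons_val_zero, Matrix.cons_val_one, Matrix.head_cons,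
          Matrix.cons_val_two, Matrix.tail_cons] at hij <;>
        first
          | rfl
          | exact absurd hij hne_uy
          | exact absurd hij hne_yz
          | exact absurd hij hne_uz
          | exact absurd hij.symm hne_uy
          | exact absurd hij.symm hne_yz
          | exact absurd hij.symm hne_uz
    have hsum3 : (∑ i, (![1, -2, 1] : Fin 3 → ℝ) i) = 0 := by
      norm_num [Fin.sum_univ_three, Matrix.cons_val_two, Matrix.tail_cons, Matrix.head_cons]
    have hval := hp 3 (by norm_num) xf hinj ![1, -2, 1] hsum3
    rw [Fin.sum_univ_three] at hval
    simp only [Fin.sum_univ_three, hxf, Matrix.cons_val_zero, Matrix.cons_val_one,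
      Matrix.head_cons, Matrix.cons_val_two, Matrix.tail_cons, negKer,
      if_pos rfl, if_neg hne_uy, if_neg hne_yz, if_neg hne_uz,
      if_neg (Ne.symm hne_uy), if_neg (Ne.symm hne_yz), if_neg (Ne.symm hne_uz),
      hduy, hdyz, hduz, hdyu, hdzy, hdzu, Real.one_rpow] at hval
    norm_num at hval
    have h2p : (2:ℝ) ^ p ≤ 4 := by nlinarith [hval]
    by_contra hgt
    push_neg at hgt
    have hlt : (2:ℝ) ^ (2:ℝ) < (2:ℝ) ^ p :=
      Real.rpow_lt_rpow_of_exponent_lt (by norm_num) hgt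
    have h4 : (2:ℝ) ^ (2:ℝ) = 4 := by
      have := Real.rpow_natCast (2:ℝ) 2
      norm_num at this
      linarith [this]
    rw [h4] at hlt
    linarith
  have := le_csSup hbdd hmem
  rw [hp₀, hε] at this
  exact this
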